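/- arXiv:2311.13558 — 2 statements merged into one kernel-verified Lean document; each statement's English description precedes it below -/
import Mathlib

section
/- Let (K,v) be a valued field and ν a valuation on K[x] extending v. For all nonconstant f, g ∈ K[x] with fg ∉ supp(ν), the level function satisfies ε_ν(fg) = max{ε_ν(f), ε_ν(g)}. -/
open Polynomial

variable {K : Type*} [Field K] {Λ : Type*} [AddCommGroup Λ] [LinearOrder Λ] [IsOrderedAddMonoid Λ]

/-- `ε` is the level ε_ν(f) = max_{s ≥ 1} (ν(f) - ν(∂ₛ f))/s of `f` (Spivakovsky's level
function), where `∂ₛ` is the `s`-th Hasse–Schmidt derivative. -/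
def IsLevel (ν : AddValuation (Polynomial K) (WithTop Λ)) (f : Polynomial K) (ε : Λ) : Prop :=
  (∀ s : ℕ, 1 ≤ s → ν f ≤ ν (hasseDeriv s f) + ((s • ε : Λ) : WithTop Λ)) ∧
  (∃ s : ℕ, 1 ≤ s ∧ ν f = ν (hasseDeriv s f) + ((s • ε : Λ) : WithTop Λ))

/-- For a valuation ν on K[x] extending v and nonconstant f, g with
ν(fg) ≠ ∞, the level function satisfies ε_ν(fg) = max(ε_ν(f), ε_ν(g)). -/
theorem stmt_12 (v : AddValuation K (WithTop Λ))
    (ν : AddValuation (Polynomial K) (WithTop Λ))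
    (hext : ∀ a : K, ν (C a) = v a)
    (f g : Polynomial K) (hf : 0 < f.degree) (hg : 0 < g.degree)
    (hfg : ν (f * g) ≠ ⊤)
    (εf εg : Λ) (hεf : IsLevel ν f εf) (hεg : IsLevel ν g εg) :
    IsLevel ν (f * g) (max εf εg) := by
  classical
  obtain ⟨hεf1, hεf2⟩ := hεf
  obtain ⟨hεg1, hεg2⟩ := hεg
  set ε := max εf εg with hε
  have hmulν : ν (f * g) = ν f + ν g := ν.map_mul f g
  have hfne : ν f ≠ ⊤ := by
    intro h; exact hfg (by rw [hmulν, h, top_add])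
  have hgne : ν g ≠ ⊤ := by
    intro h; exact hfg (by rw [hmulν, h, add_top])
  obtain ⟨a, ha⟩ := WithTop.ne_top_iff_exists.mp hfne
  obtain ⟨b, hb⟩ := WithTop.ne_top_iff_exists.mp hgne
  have allQf : ∀ i : ℕ, ν f ≤ ν (hasseDeriv i f) + ((i • ε : Λ) : WithTop Λ) := by
    intro i
    rcases Nat.eq_zero_or_pos i with h0 | h1
    · subst h0; simp [hasseDeriv_zero']
    · calc ν f ≤ ν (hasseDeriv i f) + ((i • εf : Λ) : WithTop Λ) := hεf1 i h1
        _ ≤ _ := by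
          apply add_le_add_right
          exact_mod_cast nsmul_le_nsmul_right (le_max_left εf εg) i
  have allQg : ∀ j : ℕ, ν g ≤ ν (hasseDeriv j g) + ((j • ε : Λ) : WithTop Λ) := by
    intro j
    rcases Nat.eq_zero_or_pos j with h0 | h1
    · subst h0; simp [hasseDeriv_zero']
    · calc ν g ≤ ν (hasseDeriv j g) + ((j • εg : Λ) : WithTop Λ) := hεg1 j h1
        _ ≤ _ := by
          apply add_le_add_right
          exact_mod_cast nsmul_le_nsmul_right (le_max_right εf εg) j
  constructor
  · -- the inequality for every s ≥ 1
    intro s _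
    rw [hmulν, hasseDeriv_mul]
    have key : ((a + b - s • ε : Λ) : WithTop Λ) ≤
        ν (∑ ij ∈ Finset.HasAntidiagonal.antidiagonal s, hasseDeriv ij.1 f * hasseDeriv ij.2 g) := by
      apply ν.map_le_sum
      intro ij hij
      rw [ν.map_mul]
      have hsum : ij.1 + ij.2 = s := Finset.HasAntidiagonal.mem_antidiagonal.mp hij
      have hstep : ν f + ν g ≤
          (ν (hasseDeriv ij.1 f) + ν (hasseDeriv ij.2 g)) + ((s • ε : Λ) : WithTop Λ) := by
        calc ν f + ν g
            ≤ (ν (hasseDeriv ij.1 f) + ((ij.1 • ε : Λ) : WithTop Λ)) +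
              (ν (hasseDeriv ij.2 g) + ((ij.2 • ε : Λ) : WithTop Λ)) :=
              add_le_add (allQf ij.1) (allQg ij.2)
          _ = (ν (hasseDeriv ij.1 f) + ν (hasseDeriv ij.2 g)) + ((s • ε : Λ) : WithTop Λ) := by
              rw [← hsum, add_nsmul, WithTop.coe_add]; abel
      rw [← WithTop.add_le_add_iff_right (WithTop.coe_ne_top (a := s • ε))]
      calc ((a + b - s • ε : Λ) : WithTop Λ) + ((s • ε : Λ) : WithTop Λ)
          = ν f + ν g := by rw [← ha, ← hb, ← WithTop.coe_add, ← WithTop.coe_add, sub_add_cancel]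
        _ ≤ _ := hstep
    calc ν f + ν g = ((a + b - s • ε : Λ) : WithTop Λ) + ((s • ε : Λ) : WithTop Λ) := by
          rw [← ha, ← hb, ← WithTop.coe_add, ← WithTop.coe_add, sub_add_cancel]
      _ ≤ _ := add_le_add_left key _
  · -- existence of an s achieving equality
    set N := f.natDegree + g.natDegree with hN
    set Qf : ℕ → Prop := fun i => ν f = ν (hasseDeriv i f) + ((i • ε : Λ) : WithTop Λ) with hQf
    set Qg : ℕ → Prop := fun j => ν g = ν (hasseDeriv j g) + ((j • ε : Λ) : WithTop Λ) with hQg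
    have Qf0 : Qf 0 := by simp [hQf, hasseDeriv_zero']
    have Qg0 : Qg 0 := by simp [hQg, hasseDeriv_zero']
    set sf := Nat.findGreatest Qf N with hsf
    set sg := Nat.findGreatest Qg N with hsg
    have hQfsf : Qf sf := Nat.findGreatest_spec (Nat.zero_le N) Qf0
    have hQgsg : Qg sg := Nat.findGreatest_spec (Nat.zero_le N) Qg0
    have hQf_le : ∀ i, Qf i → i ≤ sf := by
      intro i hi
      by_contra hlt
      push_neg at hlt
      have hne : hasseDeriv i f ≠ 0 := by
        intro h0
        apply hfne
        rw [hQf] at hi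
        simp only [h0, ν.map_zero, top_add] at hi
        exact hi
      have hiN : i ≤ N := by
        have : i ≤ f.natDegree := by
          by_contra hgt; push_neg at hgt
          exact hne (hasseDeriv_eq_zero_of_lt_natDegree f i hgt)
        omega
      exact Nat.findGreatest_is_greatest hlt hiN hi
    have hQg_le : ∀ j, Qg j → j ≤ sg := by
      intro j hj
      by_contra hlt
      push_neg at hlt
      have hne : hasseDeriv j g ≠ 0 := by
        intro h0
        apply hgne
        rw [hQg] at hj
        simp only [h0, ν.map_zero, top_add] at hj
        exact hj
      have hjN : j ≤ N := by
        have : j ≤ g.natDegree := by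
          by_contra hgt; push_neg at hgt
          exact hne (hasseDeriv_eq_zero_of_lt_natDegree g j hgt)
        omega
      exact Nat.findGreatest_is_greatest hlt hjN hj
    have hone : 1 ≤ sf + sg := by
      rcases le_total εf εg with hle | hle
      · obtain ⟨s, hs1, hs2⟩ := hεg2
        have hQgs : Qg s := by
          show ν g = ν (hasseDeriv s g) + ((s • ε : Λ) : WithTop Λ)
          rw [hε, max_eq_right hle]; exact hs2
        have := hQg_le s hQgs
        omega
      · obtain ⟨s, hs1, hs2⟩ := hεf2
        have hQfs : Qf s := by
          show ν f = ν (hasseDeriv s f) + ((s • ε : Λ) : WithTop Λ)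
          rw [hε, max_eq_left hle]; exact hs2
        have := hQf_le s hQfs
        omega
    -- extract finite values of the optimal derivatives
    have hdfne : ν (hasseDeriv sf f) ≠ ⊤ := by
      intro h0
      apply hfne
      rw [hQf] at hQfsf
      rw [hQfsf, h0, top_add]
    have hdgne : ν (hasseDeriv sg g) ≠ ⊤ := by
      intro h0
      apply hgne
      rw [hQg] at hQgsg
      rw [hQgsg, h0, top_add]
    obtain ⟨af, haf⟩ := WithTop.ne_top_iff_exists.mp hdfne
    obtain ⟨bg, hbg⟩ := WithTop.ne_top_iff_exists.mp hdgne
    have haeq : a = af + sf • ε := by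
      have : (a : WithTop Λ) = ((af + sf • ε : Λ) : WithTop Λ) := by
        rw [ha, WithTop.coe_add, haf]
        exact hQfsf
      exact_mod_cast this
    have hbeq : b = bg + sg • ε := by
      have : (b : WithTop Λ) = ((bg + sg • ε : Λ) : WithTop Λ) := by
        rw [hb, WithTop.coe_add, hbg]
        exact hQgsg
      exact_mod_cast this
    set m : Λ := af + bg with hm
    have hcoe : ((m : Λ) : WithTop Λ) + (((sf + sg) • ε : Λ) : WithTop Λ) = ν f + ν g := by
      rw [← ha, ← hb, ← WithTop.coe_add, ← WithTop.coe_add]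
      congr 1
      rw [haeq, hbeq, hm, add_nsmul]
      abel
    have ht0mem : (sf, sg) ∈ Finset.HasAntidiagonal.antidiagonal (sf + sg) := Finset.HasAntidiagonal.mem_antidiagonal.mpr rfl
    have hterm : ν (hasseDeriv sf f * hasseDeriv sg g) = ((m : Λ) : WithTop Λ) := by
      rw [ν.map_mul, ← haf, ← hbg, ← WithTop.coe_add]
    have hrest : ∀ ij ∈ (Finset.HasAntidiagonal.antidiagonal (sf + sg)).erase (sf, sg),
        ((m : Λ) : WithTop Λ) < ν (hasseDeriv ij.1 f * hasseDeriv ij.2 g) := by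
      rintro ⟨i, j⟩ hij
      obtain ⟨hne, hmem⟩ := Finset.mem_erase.mp hij
      have hsum : i + j = sf + sg := Finset.HasAntidiagonal.mem_antidiagonal.mp hmem
      have hcases : sf < i ∨ sg < j := by
        have hij' : i ≠ sf ∨ j ≠ sg := by
          by_contra h; push_neg at h
          exact hne (Prod.ext h.1 h.2)
        omega
      have hlt : ν f + ν g <
          (ν (hasseDeriv i f) + ν (hasseDeriv j g)) + (((sf + sg) • ε : Λ) : WithTop Λ) := by
        rcases hcases with hlt' | hlt'
        · have hnQ : ¬ Qf i := fun h => absurd (hQf_le i h) (not_le.mpr hlt')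
          have hstrict : ν f < ν (hasseDeriv i f) + ((i • ε : Λ) : WithTop Λ) :=
            lt_of_le_of_ne (allQf i) hnQ
          calc ν f + ν g
              < (ν (hasseDeriv i f) + ((i • ε : Λ) : WithTop Λ)) +
                (ν (hasseDeriv j g) + ((j • ε : Λ) : WithTop Λ)) :=
                WithTop.add_lt_add_of_lt_of_le hgne hstrict (allQg j)
            _ = _ := by rw [← hsum, add_nsmul, WithTop.coe_add]; abel
        · have hnQ : ¬ Qg j := fun h => absurd (hQg_le j h) (not_le.mpr hlt')
          have hstrict : ν g < ν (hasseDeriv j g) + ((j • ε : Λ) : WithTop Λ) :=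
            lt_of_le_of_ne (allQg j) hnQ
          calc ν f + ν g
              < (ν (hasseDeriv i f) + ((i • ε : Λ) : WithTop Λ)) +
                (ν (hasseDeriv j g) + ((j • ε : Λ) : WithTop Λ)) :=
                WithTop.add_lt_add_of_le_of_lt hfne (allQf i) hstrict
            _ = _ := by rw [← hsum, add_nsmul, WithTop.coe_add]; abel
      rw [← hcoe] at hlt
      rw [ν.map_mul]
      exact lt_of_add_lt_add_right hlt
    have hmain : ν (hasseDeriv (sf + sg) (f * g)) = ((m : Λ) : WithTop Λ) := by
      rw [hasseDeriv_mul, ← Finset.add_sum_erase _ _ ht0mem,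
        ν.map_add_eq_of_lt_left, hterm]
      rw [hterm]
      exact ν.map_lt_sum WithTop.coe_ne_top hrest
    exact ⟨sf + sg, hone, by rw [hmulν, hmain, hcoe]⟩
end

section
/- Let Γ be a divisible ordered abelian group, δ a cut in Γ with invariance group H = H(δ) such that δ^L + H has a supremum ξ + H realized by an element ξ of an ordered group extension Γ' ⊇ Γ with ξ + H > x + H for all x ∈ δ^L (vertical supremum). Then for every rational q > 1 and every x ∈ δ^L, there exists y ∈ δ^L such that q(y - x) > ξ - x. -/
section Helpers
variable {Γ : Type*} [AddCommGroup Γ] [LinearOrder Γ] [IsOrderedAddMonoid Γ] [Module ℚ Γ]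

private lemma qsmul_pos' {c : ℚ} (hc : 0 < c) {g : Γ} (hg : 0 < g) : 0 < c • g := by
  have hden : (c.den : ℚ) * c = (c.num : ℚ) := by
    rw [mul_comm]
    exact_mod_cast Rat.mul_den_eq_num c
  have h1 : c.den • (c • g) = c.num • g := by
    rw [← Nat.cast_smul_eq_nsmul ℚ, smul_smul, hden, Int.cast_smul_eq_zsmul]
  have hnum : 0 < c.num := Rat.num_pos.mpr hc
  have h2 : 0 < c.num • g := by
    have hn : c.num.toNat ≠ 0 := by omega
    have := nsmul_pos hg hn
    rwa [← natCast_zsmul, Int.toNat_of_nonneg hnum.le] at this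
  by_contra hcg
  push_neg at hcg
  have h3 : c.den • (c • g) ≤ 0 := by
    calc c.den • (c • g) ≤ c.den • (0:Γ) := nsmul_le_nsmul_right hcg c.den
    _ = 0 := smul_zero _
  rw [h1] at h3
  exact absurd h2 (not_lt.mpr h3)

private lemma qsmul_le_iff' {c : ℚ} (hc : 0 < c) {a b : Γ} : c • a ≤ c • b ↔ a ≤ b := by
  constructor
  · intro h
    by_contra hba
    push_neg at hba
    have : 0 < c • (a - b) := qsmul_pos' hc (sub_pos.mpr hba)
    rw [smul_sub] at this
    exact absurd h (not_le.mpr (sub_pos.mp this))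
  · intro h
    rcases eq_or_lt_of_le h with rfl | hlt
    · exact le_rfl
    · have : 0 < c • (b - a) := qsmul_pos' hc (sub_pos.mpr hlt)
      rw [smul_sub] at this
      exact (sub_pos.mp this).le

end Helpers

/-- Let Γ be a divisible ordered abelian group, δ = (L,R) a cut with
invariance group H = H(δ), and Γ' an ordered group extension of Γ (via a strictly
monotone embedding ι, e.g. the Hahn product from Hahn's embedding theorem). Suppose
ξ ∈ Γ' realizes the vertical supremum: ξ + H = sup{x + H | x ∈ L} in Γ'/H and
ξ + H > x + H for all x ∈ L. Then for every rational q > 1 and every x ∈ L, there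
exists y ∈ L with q(y - x) > ξ - x. -/
theorem stmt_18 {Γ Γ' : Type*} [AddCommGroup Γ] [LinearOrder Γ] [IsOrderedAddMonoid Γ] [Module ℚ Γ]
    [AddCommGroup Γ'] [LinearOrder Γ'] [IsOrderedAddMonoid Γ']
    (ι : Γ →+ Γ') (hι : StrictMono ι)
    (L R : Set Γ) (hLR : ∀ x ∈ L, ∀ y ∈ R, x < y) (hcover : L ∪ R = Set.univ)
    -- H = H(δ), the invariance group of the cut δ
    (H : Set Γ) (hH : H = {h : Γ | (fun x => h + x) '' L = L})
    (ξ : Γ')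
    -- ξ + H > x + H for every x ∈ L (the supremum is not attained in δ^L + H)
    (hub : ∀ x ∈ L, ∀ h ∈ H, ι x + ι h < ξ)
    -- ξ + H is the *least* upper bound of {x + H | x ∈ L} in Γ'/H
    (hlub : ∀ η : Γ', (∀ x ∈ L, ∃ h ∈ H, ι x ≤ η + ι h) → ∃ h ∈ H, ξ ≤ η + ι h) :
    ∀ q : ℚ, 1 < q → ∀ x ∈ L, ∃ y ∈ L, ξ - ι x < ι (q • (y - x)) := by
  intro q hq x hxL
  by_contra hcon
  push_neg at hcon
  -- hcon : ∀ y ∈ L, ι (q • (y - x)) ≤ ξ - ι x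
  have hq0 : (0:ℚ) < q := lt_trans one_pos hq
  have h0H : (0:Γ) ∈ H := by rw [hH]; simp
  have hmemL : ∀ h ∈ H, ∀ y ∈ L, y + h ∈ L := by
    intro h hh y hy
    rw [hH] at hh
    have : h + y ∈ (fun x => h + x) '' L := ⟨y, hy, rfl⟩
    rw [hh] at this
    rwa [add_comm]
  have hnegH : ∀ h ∈ H, -h ∈ H := by
    intro h hh
    rw [hH] at hh ⊢
    show (fun x => -h + x) '' L = L
    conv_lhs => rw [← hh]
    rw [Set.image_image]
    simp
  have hRmem : ∀ z : Γ, z ∉ L → z ∈ R := fun z hz =>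
    (show z ∈ L ∪ R from hcover ▸ Set.mem_univ z).resolve_left hz
  have hdc : ∀ w ∈ L, ∀ z : Γ, z ≤ w → z ∈ L := by
    intro w hw z hz
    by_contra hzL
    exact absurd (hLR w hw z (hRmem z hzL)) (not_lt.mpr hz)
  -- there is y₀ ∈ L strictly above x + H
  have hy0 : ∃ y₀ ∈ L, ∀ h ∈ H, x + h < y₀ := by
    by_contra hno
    push_neg at hno
    have hb : ∀ w ∈ L, ∃ h ∈ H, ι w ≤ ι x + ι h := by
      intro w hw
      obtain ⟨h, hh, hle⟩ := hno w hw
      exact ⟨h, hh, by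
        calc ι w ≤ ι (x + h) := hι.le_iff_le.mpr hle
        _ = ι x + ι h := map_add ι x h⟩
    obtain ⟨h, hh, hle⟩ := hlub (ι x) hb
    exact absurd hle (not_le.mpr (hub x hxL h hh))
  obtain ⟨y₀, hy0L, hy0gt⟩ := hy0
  set d := y₀ - x with hd_def
  have hd : 0 < d := sub_pos.mpr (by simpa using hy0gt 0 h0H)
  -- the scaling map y ↦ x + q•(y - x) preserves L
  have hψ : ∀ y ∈ L, x + q • (y - x) ∈ L := by
    intro y hy
    by_contra hRmem'
    have hRm : x + q • (y - x) ∈ R := hRmem _ hRmem'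
    have hb : ∀ w ∈ L, ∃ h ∈ H, ι w ≤ ι (x + q • (y - x)) + ι h := by
      intro w hw
      exact ⟨0, h0H, by simpa using (hι (hLR w hw _ hRm)).le⟩
    obtain ⟨h, hh, hξle⟩ := hlub _ hb
    have hξle' : ξ ≤ ι x + ι (q • (y - x)) + ι h := by rwa [map_add] at hξle
    -- step 1 : q • h ≤ h
    have step1 : q • h ≤ h := by
      have e1 : q • (y + h - x) = q • (y - x) + q • h := by
        rw [← smul_add]; congr 1; abel
      have t1 : ι (q • (y - x)) + ι (q • h) ≤ ξ - ι x := by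
        have := hcon (y + h) (hmemL h hh y hy)
        rwa [e1, map_add] at this
      have t1' : ι (q • (y - x)) + ι (q • h) + ι x ≤ ξ := le_sub_iff_add_le.mp t1
      have t2 : ι (q • (y - x)) + ι (q • h) + ι x ≤ ι x + ι (q • (y - x)) + ι h :=
        le_trans t1' hξle'
      have t3 : (ι (q • (y - x)) + ι x) + ι (q • h) ≤ (ι (q • (y - x)) + ι x) + ι h := by
        calc (ι (q • (y - x)) + ι x) + ι (q • h) = ι (q • (y - x)) + ι (q • h) + ι x := by abel
        _ ≤ ι x + ι (q • (y - x)) + ι h := t2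
        _ = (ι (q • (y - x)) + ι x) + ι h := by abel
      exact hι.le_iff_le.mp (le_of_add_le_add_left t3)
    -- step 2 : -(q • h) ≤ h
    have step2 : -(q • h) ≤ h := by
      have e1 : q • (y + -h - x) = q • (y - x) + q • (-h) := by
        rw [← smul_add]; congr 1; abel
      have t1 : ι (q • (y - x)) + ι (q • (-h)) ≤ ξ - ι x := by
        have := hcon (y + -h) (hmemL (-h) (hnegH h hh) y hy)
        rwa [e1, map_add] at this
      have t1' : ι (q • (y - x)) + ι (q • (-h)) + ι x ≤ ξ := le_sub_iff_add_le.mp t1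
      have t2 : ι (q • (y - x)) + ι (q • (-h)) + ι x ≤ ι x + ι (q • (y - x)) + ι h :=
        le_trans t1' hξle'
      have t3 : (ι (q • (y - x)) + ι x) + ι (q • (-h)) ≤ (ι (q • (y - x)) + ι x) + ι h := by
        calc (ι (q • (y - x)) + ι x) + ι (q • (-h))
            = ι (q • (y - x)) + ι (q • (-h)) + ι x := by abel
        _ ≤ ι x + ι (q • (y - x)) + ι h := t2
        _ = (ι (q • (y - x)) + ι x) + ι h := by abel
      have : q • (-h) ≤ h := hι.le_iff_le.mp (le_of_add_le_add_left t3)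
      rwa [smul_neg] at this
    -- conclude h = 0
    have hh0 : h = 0 := by
      rcases lt_trichotomy h 0 with hlt | heq | hgt
      · exfalso
        have h2 : 0 < q • (-h) := qsmul_pos' hq0 (neg_pos.mpr hlt)
        rw [smul_neg] at h2
        exact absurd (lt_of_lt_of_le h2 step2) (not_lt.mpr hlt.le)
      · exact heq
      · exfalso
        have h1 : 0 < (q - 1) • h := qsmul_pos' (by linarith) hgt
        rw [sub_smul, one_smul] at h1
        have h2 : h < q • h := sub_pos.mp h1
        exact absurd (lt_of_lt_of_le h2 step1) (lt_irrefl h)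
    rw [hh0, map_zero, add_zero] at hξle'
    -- then y is a maximum of L, contradiction
    have hmax : ∀ w ∈ L, w ≤ y := by
      intro w hw
      have t : ι (q • (w - x)) ≤ ι (q • (y - x)) := by
        refine le_trans (hcon w hw) ?_
        exact sub_le_iff_le_add'.mpr hξle'
      have t2 : q • (w - x) ≤ q • (y - x) := hι.le_iff_le.mp t
      have t3 : w - x ≤ y - x := (qsmul_le_iff' hq0).mp t2
      exact (sub_le_sub_iff_right x).mp t3
    obtain ⟨h', hh', hle'⟩ := hlub (ι y)
      (fun w hw => ⟨0, h0H, by simpa using hι.le_iff_le.mpr (hmax w hw)⟩)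
    exact absurd hle' (not_le.mpr (hub y hy h' hh'))
  -- powers of q applied to elements of L based at x stay in L
  have hpow : ∀ (z : Γ), x + z ∈ L → ∀ n : ℕ, x + (q ^ n) • z ∈ L := by
    intro z hz n
    induction n with
    | zero => simpa using hz
    | succ n ih =>
      have h1 := hψ _ ih
      have e : x + q • (x + q ^ n • z - x) = x + q ^ (n + 1) • z := by
        rw [add_sub_cancel_left, smul_smul, ← pow_succ']
      rwa [e] at h1
  have hxd : x + d = y₀ := by rw [hd_def]; abel
  -- find w ∈ L with w + d ∉ L
  have hwex : ∃ w ∈ L, w + d ∉ L := by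
    by_contra hall
    push_neg at hall
    have hdH : d ∈ H := by
      rw [hH]
      ext z
      constructor
      · rintro ⟨w, hw, rfl⟩
        show d + w ∈ L
        rw [add_comm]
        exact hall w hw
      · intro hz
        exact ⟨z - d, hdc z hz (z - d) (sub_le_self z hd.le), by show d + (z - d) = z; abel⟩
    exact absurd (hxd ▸ hy0gt d hdH) (lt_irrefl y₀)
  obtain ⟨w, hwL, hwdnL⟩ := hwex
  have hwdR : w + d ∈ R := hRmem _ hwdnL
  set e := w - x with he_def
  have hxe : x + e = w := by rw [he_def]; abel
  -- elements of L based at x are bounded by e + d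
  have bound : ∀ z : Γ, x + z ∈ L → z < e + d := by
    intro z hz
    have h1 : x + z < w + d := hLR _ hz _ hwdR
    have h2 : x + z < x + (e + d) := by
      rwa [show x + (e + d) = w + d by rw [he_def]; abel]
    exact lt_of_add_lt_add_left h2
  have bd : ∀ n : ℕ, (q ^ n - 1) • d < e := by
    intro n
    have h1 := bound _ (hpow d (by rw [hxd]; exact hy0L) n)
    rw [sub_smul, one_smul]
    exact sub_lt_iff_lt_add.mpr h1
  have be : ∀ n : ℕ, (q ^ n - 1) • e < d := by
    intro n
    have h1 := bound _ (hpow e (by rw [hxe]; exact hwL) n)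
    have h2 : q ^ n • e < d + e := by rwa [show d + e = e + d by abel]
    rw [sub_smul, one_smul]
    exact sub_lt_iff_lt_add.mpr h2
  have he : 0 < e := by
    have h1 := bd 1
    rw [pow_one] at h1
    exact lt_trans (qsmul_pos' (by linarith) hd) h1
  obtain ⟨n, hn⟩ := pow_unbounded_of_one_lt (2:ℚ) hq
  have hde : d < e := by
    have h1 := bd n
    have h2 : 0 < (q ^ n - 1 - 1) • d := qsmul_pos' (by linarith) hd
    rw [sub_smul, one_smul] at h2
    exact lt_trans (sub_pos.mp h2) h1
  have hed : e < d := by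
    have h1 := be n
    have h2 : 0 < (q ^ n - 1 - 1) • e := qsmul_pos' (by linarith) he
    rw [sub_smul, one_smul] at h2
    exact lt_trans (sub_pos.mp h2) h1
  exact absurd hde (not_lt.mpr hed.le)
end
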